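/- Every hypertree on [n] has at most n − 1 hyperedges, and a hypertree with exactly n − 1 hyperedges is a tree (each hyperedge has exactly 2 vertices). -/

import Mathlib

/-- A hypergraph on `[n]`, identified with its set of hyperedges:
every hyperedge has at least two vertices. -/
def IsHypergraph {n : ℕ} (E : Finset (Finset (Fin n))) : Prop :=
  ∀ e ∈ E, 2 ≤ e.card

/-- Data of a walk: a length `len`, a sequence of `len + 1` vertices and
`len` hyperedges. -/
structure WalkData (n : ℕ) where
  len : ℕ
  verts : Fin (len + 1) → Fin n
  eds : Fin len → Finset (Fin n)

/-- `s` is a simple walk from `v` to `w` in the hypergraph `E`: an alternating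
sequence of pairwise distinct vertices and pairwise distinct hyperedges
`v = v₀, e₁, v₁, …, e_p, v_p = w` with `{vₖ, vₖ₊₁} ⊆ eₖ₊₁`. -/
def IsSimpleWalk {n : ℕ} (E : Finset (Finset (Fin n))) (v w : Fin n)
    (s : WalkData n) : Prop :=
  s.verts 0 = v ∧ s.verts (Fin.last s.len) = w ∧
  Function.Injective s.verts ∧ Function.Injective s.eds ∧
  ∀ k : Fin s.len, s.eds k ∈ E ∧ s.verts k.castSucc ∈ s.eds k ∧ s.verts k.succ ∈ s.eds k

/-- A hypertree: a hypergraph in which any two vertices are joined by a unique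
simple walk. -/
def IsHypertree {n : ℕ} (E : Finset (Finset (Fin n))) : Prop :=
  IsHypergraph E ∧ ∀ v w : Fin n, ∃! s : WalkData n, IsSimpleWalk E v w s

namespace Stmt10Aux

variable {n : ℕ} {E : Finset (Finset (Fin n))}

/-- The single-edge walk `u —e— v`. -/
def singleWalk (u v : Fin n) (e : Finset (Fin n)) : WalkData n :=
  ⟨1, ![u, v], ![e]⟩

lemma singleWalk_spec {u v : Fin n} {e : Finset (Fin n)} (he : e ∈ E)
    (hu : u ∈ e) (hv : v ∈ e) (huv : u ≠ v) :
    IsSimpleWalk E u v (singleWalk u v e) := by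
  refine ⟨rfl, rfl, ?_, ?_, ?_⟩
  · intro a b hab
    fin_cases a <;> fin_cases b <;> simp_all [singleWalk]
  · intro a b _
    fin_cases a; fin_cases b; rfl
  · intro k
    fin_cases k
    exact ⟨he, hu, hv⟩

/-- The trivial walk at `r`. -/
def nilWalk (r : Fin n) : WalkData n := ⟨0, fun _ => r, Fin.elim0⟩

lemma nilWalk_spec (r : Fin n) : IsSimpleWalk E r r (nilWalk r) :=
  ⟨rfl, rfl, fun a b _ => Fin.ext (by
    have h1 : a.val < 1 := a.isLt
    have h2 : b.val < 1 := b.isLt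
    omega), fun a => a.elim0, fun k => k.elim0⟩

/-- The prefix of a walk, keeping the first `k` edges. -/
def prefixWalk (s : WalkData n) (k : ℕ) (hk : k ≤ s.len) : WalkData n :=
  ⟨k, fun i => s.verts (Fin.castLE (Nat.succ_le_succ hk) i),
    fun i => s.eds (Fin.castLE hk i)⟩

lemma prefixWalk_spec {v w : Fin n} {s : WalkData n} (hs : IsSimpleWalk E v w s)
    {k : ℕ} (hk : k ≤ s.len) :
    IsSimpleWalk E v (s.verts ⟨k, Nat.lt_succ_of_le hk⟩) (prefixWalk s k hk) := by
  obtain ⟨h0, _, hinj, hedinj, hcond⟩ := hs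
  refine ⟨?_, ?_, ?_, ?_, ?_⟩
  · show s.verts (Fin.castLE (Nat.succ_le_succ hk) (0 : Fin (k+1))) = v
    have h : Fin.castLE (Nat.succ_le_succ hk) (0 : Fin (k+1)) = (0 : Fin (s.len+1)) := by
      ext; simp
    rw [h]; exact h0
  · show s.verts (Fin.castLE (Nat.succ_le_succ hk) (Fin.last k)) = _
    congr 1
  · intro a b hab
    exact Fin.castLE_injective _ (hinj hab)
  · intro a b hab
    exact Fin.castLE_injective _ (hedinj hab)
  · intro i
    have h := hcond (Fin.castLE hk i)
    refine ⟨h.1, ?_, ?_⟩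
    · have : (Fin.castLE hk i).castSucc = Fin.castLE (Nat.succ_le_succ hk) i.castSucc := by
        ext; rfl
      rw [this] at h
      exact h.2.1
    · have : (Fin.castLE hk i).succ = Fin.castLE (Nat.succ_le_succ hk) i.succ := by
        ext; rfl
      rw [this] at h
      exact h.2.2

/-- Prepend a vertex and an edge to a walk. -/
def consWalk (u : Fin n) (e : Finset (Fin n)) (s : WalkData n) : WalkData n :=
  ⟨s.len + 1, Fin.cons u s.verts, Fin.cons e s.eds⟩

lemma consWalk_spec {u v w : Fin n} {e : Finset (Fin n)} {s : WalkData n}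
    (hs : IsSimpleWalk E v w s) (he : e ∈ E) (hu : u ∈ e) (hv : v ∈ e)
    (hvr : u ∉ Set.range s.verts) (her : e ∉ Set.range s.eds) :
    IsSimpleWalk E u w (consWalk u e s) := by
  obtain ⟨h0, hl, hinj, hedinj, hcond⟩ := hs
  unfold IsSimpleWalk consWalk
  simp only []
  refine ⟨rfl, ?_, ?_, ?_, ?_⟩
  · have h : Fin.last (s.len + 1) = Fin.succ (Fin.last s.len) := by ext; simp
    rw [h, Fin.cons_succ]
    exact hl
  · exact Fin.cons_injective_of_injective hvr hinj
  · exact Fin.cons_injective_of_injective her hedinj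
  · intro k
    refine Fin.cases ?_ ?_ k
    · have h1 : Fin.castSucc (0 : Fin (s.len + 1)) = (0 : Fin (s.len + 2)) := by ext; simp
      have h2 : Fin.succ (0 : Fin (s.len + 1)) = Fin.succ (0 : Fin (s.len + 1)) := rfl
      refine ⟨?_, ?_, ?_⟩
      · rw [Fin.cons_zero]; exact he
      · rw [h1, Fin.cons_zero, Fin.cons_zero]; exact hu
      · rw [Fin.cons_zero, Fin.cons_succ, h0]; exact hv
    · intro j
      have h := hcond j
      refine ⟨?_, ?_, ?_⟩
      · rw [Fin.cons_succ]; exact h.1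
      · rw [Fin.cons_succ, ← Fin.succ_castSucc, Fin.cons_succ]; exact h.2.1
      · rw [Fin.cons_succ, Fin.cons_succ]; exact h.2.2

lemma walk_eq_len {s t : WalkData n} (h : s = t) : s.len = t.len := by rw [h]

lemma walk_eq_eds0 {s t : WalkData n} (h : s = t) (hs : 0 < s.len) (ht : 0 < t.len) :
    s.eds ⟨0, hs⟩ = t.eds ⟨0, ht⟩ := by
  subst h; rfl

end Stmt10Aux

open Stmt10Aux in
/-- A hypertree on `[n]` has at most `n - 1` hyperedges, and a hypertree with
exactly `n - 1` hyperedges is a tree: each hyperedge has exactly two vertices. -/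
theorem stmt10 (n : ℕ) (hn : 1 ≤ n) (E : Finset (Finset (Fin n)))
    (hE : IsHypertree E) :
    E.card ≤ n - 1 ∧ (E.card = n - 1 → ∀ e ∈ E, e.card = 2) := by
  classical
  obtain ⟨hgraph, huniq⟩ := hE
  set r : Fin n := ⟨0, hn⟩ with hr
  choose W hW hWu using fun v => huniq v r
  -- walks from a vertex distinct from `r` have positive length
  have hlenpos : ∀ v : Fin n, v ≠ r → 0 < (W v).len := by
    intro v hv
    rcases Nat.eq_zero_or_pos (W v).len with h | h
    · exfalso
      obtain ⟨h0, hl, _, _, _⟩ := hW v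
      apply hv
      rw [← h0, ← hl]
      congr 1
      ext
      simp [h]
    · exact h
  have hWr : (W r).len = 0 := by
    have := hWu r (nilWalk r) (nilWalk_spec r)
    rw [← this]
    rfl
  -- the first edge of the walk from `v` to the root
  set D : Fin n → Finset (Fin n) :=
    fun v => if h : 0 < (W v).len then (W v).eds ⟨0, h⟩ else ∅ with hD
  have hDr : D r = ∅ := by simp [hD, hWr]
  -- key claim: for `e ∈ E`, at most one vertex of `e` fails `D v = e`.
  have key : ∀ e ∈ E, ∀ u ∈ e, ∀ v ∈ e, u ≠ v → D u ≠ e → D v ≠ e → False := by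
    intro e heE u hu v hv huv hDu hDv
    -- Case A: u appears among vertices of W v
    by_cases hA : u ∈ Set.range (W v).verts
    · obtain ⟨k, hk⟩ := hA
      have hk0 : k.val ≠ 0 := by
        intro h
        apply huv
        have : k = 0 := by ext; simp [h]
        rw [this] at hk
        rw [← hk, (hW v).1]
      have hkle : k.val ≤ (W v).len := Nat.lt_succ_iff.mp k.isLt
      have hpre := prefixWalk_spec (E := E) (hW v) hkle
      have hEnd : (W v).verts ⟨k.val, Nat.lt_succ_of_le hkle⟩ = u := hk
      rw [hEnd] at hpre
      have hsingle := singleWalk_spec heE hv hu (Ne.symm huv)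
      have heq : prefixWalk (W v) k.val hkle = singleWalk v u e := by
        rcases huniq v u with ⟨s, _, hs⟩
        rw [hs _ hpre, hs _ hsingle]
      have hlen : k.val = 1 := walk_eq_len heq
      apply hDv
      have hpos : 0 < (W v).len := by omega
      rw [show D v = (W v).eds ⟨0, hpos⟩ from dif_pos hpos]
      exact walk_eq_eds0 heq (show 0 < k.val by omega) Nat.one_pos
    -- Case B: e appears among edges of W v
    · by_cases hB : e ∈ Set.range (W v).eds
      · obtain ⟨j, hj⟩ := hB
        have hjle : j.val + 1 ≤ (W v).len := j.isLt
        have hpre := prefixWalk_spec (E := E) (hW v) hjle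
        have hy : (W v).verts ⟨j.val + 1, Nat.lt_succ_of_le hjle⟩ = (W v).verts j.succ := rfl
        have hymem : (W v).verts j.succ ∈ e := by rw [← hj]; exact ((hW v).2.2.2.2 j).2.2
        have hyne : v ≠ (W v).verts j.succ := by
          intro h
          have h0 : (W v).verts 0 = (W v).verts j.succ := by rw [(hW v).1]; exact h
          have := (hW v).2.2.1 h0
          exact (Fin.succ_ne_zero j) this.symm
        rw [hy] at hpre
        have hsingle := singleWalk_spec heE hv hymem hyne
        have heq : prefixWalk (W v) (j.val + 1) hjle = singleWalk v ((W v).verts j.succ) e := by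
          rcases huniq v ((W v).verts j.succ) with ⟨s, _, hs⟩
          rw [hs _ hpre, hs _ hsingle]
        have hlen : j.val + 1 = 1 := walk_eq_len heq
        apply hDv
        have hpos : 0 < (W v).len := by omega
        rw [show D v = (W v).eds ⟨0, hpos⟩ from dif_pos hpos]
        have hj0 : j = ⟨0, hpos⟩ := by ext; simp; omega
        rw [hj0] at hj
        exact hj
      -- Case C: extend W v by the edge e to get the walk from u
      · have hcons := consWalk_spec (E := E) (hW v) heE hu hv hA hB
        have heq : consWalk u e (W v) = W u := hWu u _ hcons
        apply hDu
        have hpos : 0 < (W u).len := by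
          have h := walk_eq_len heq
          have h2 : (consWalk u e (W v)).len = (W v).len + 1 := rfl
          omega
        rw [show D u = (W u).eds ⟨0, hpos⟩ from dif_pos hpos]
        exact walk_eq_eds0 heq.symm hpos (Nat.succ_pos _)
  -- the set of vertices of `e` whose walk to the root starts with `e`
  set T : Finset (Fin n) → Finset (Fin n) := fun e => e.filter (fun v => D v = e) with hT
  have hne : ∀ e ∈ E, e ≠ ∅ := by
    intro e he h
    have := hgraph e he
    rw [h] at this
    simp at this
  have hTsub : ∀ e ∈ E, T e ⊆ Finset.univ.erase r := by
    intro e he x hx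
    rw [Finset.mem_erase]
    refine ⟨?_, Finset.mem_univ x⟩
    rintro rfl
    have := (Finset.mem_filter.mp hx).2
    rw [hDr] at this
    exact hne e he this.symm
  have hT1 : ∀ e ∈ E, e.card - 1 ≤ (T e).card := by
    intro e he
    have hsub : T e ⊆ e := Finset.filter_subset _ _
    have hsd : (e \ T e).card ≤ 1 := by
      rw [Finset.card_le_one]
      intro a ha b hb
      by_contra hab
      rcases Finset.mem_sdiff.mp ha with ⟨hae, haT⟩
      rcases Finset.mem_sdiff.mp hb with ⟨hbe, hbT⟩
      have hDa : D a ≠ e := fun h => haT (Finset.mem_filter.mpr ⟨hae, h⟩)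
      have hDb : D b ≠ e := fun h => hbT (Finset.mem_filter.mpr ⟨hbe, h⟩)
      exact key e he a hae b hbe hab hDa hDb
    have := Finset.card_sdiff_add_card_eq_card hsub
    omega
  have hdisj : ∀ e₁ ∈ E, ∀ e₂ ∈ E, e₁ ≠ e₂ → Disjoint (T e₁) (T e₂) := by
    intro e₁ _ e₂ _ h12
    rw [Finset.disjoint_left]
    intro a ha1 ha2
    apply h12
    have h1 := (Finset.mem_filter.mp ha1).2
    have h2 := (Finset.mem_filter.mp ha2).2
    rw [← h1, ← h2]
  have hsum : ∑ e ∈ E, (T e).card ≤ n - 1 := by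
    have hbu : (E.biUnion T).card = ∑ e ∈ E, (T e).card :=
      Finset.card_biUnion hdisj
    have hsub : E.biUnion T ⊆ Finset.univ.erase r := by
      intro x hx
      rcases Finset.mem_biUnion.mp hx with ⟨e, he, hxe⟩
      exact hTsub e he hxe
    have hcard : (Finset.univ.erase r).card = n - 1 := by
      rw [Finset.card_erase_of_mem (Finset.mem_univ r)]
      simp
    calc ∑ e ∈ E, (T e).card = (E.biUnion T).card := hbu.symm
      _ ≤ (Finset.univ.erase r).card := Finset.card_le_card hsub
      _ = n - 1 := hcard
  have hmono : ∑ e ∈ E, (e.card - 1) ≤ ∑ e ∈ E, (T e).card :=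
    Finset.sum_le_sum hT1
  have hone : ∀ e ∈ E, 1 ≤ e.card - 1 := by
    intro e he
    have := hgraph e he
    omega
  have hcard_le : E.card ≤ ∑ e ∈ E, (e.card - 1) := by
    calc E.card = ∑ _e ∈ E, 1 := by simp
      _ ≤ ∑ e ∈ E, (e.card - 1) := Finset.sum_le_sum hone
  constructor
  · omega
  · intro hcard e he
    have heq : ∑ _e ∈ E, 1 = ∑ e ∈ E, (e.card - 1) := by
      have h1 : ∑ _e ∈ E, (1 : ℕ) = E.card := by simp
      omega
    have := (Finset.sum_eq_sum_iff_of_le hone).mp heq e he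
    have h2 := hgraph e he
    omega
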